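/- Let C be an [n,k] linear code over F_p with minimum distance d_1(C), and let 1 ≤ r ≤ k. Then d_r(C) ≥ Σ_{i=0}^{r-1} ⌈ d_1(C) / p^i ⌉ (Griesmer-like bound). -/

import Mathlib

lemma ceil_div_le_iff {a b t : ℕ} (hb : 0 < b) : (a + b - 1) / b ≤ t ↔ a ≤ b * t := by
  rw [Nat.div_le_iff_le_mul_add_pred hb]; omega

open Module in
lemma exists_sub {K V : Type*} [Field K] [AddCommGroup V] [Module K V]
    [FiniteDimensional K V] (C : Submodule K V) (m : ℕ) (h : m ≤ finrank K C) :
    ∃ U : Submodule K V, U ≤ C ∧ finrank K U = m := by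
  induction m with
  | zero => exact ⟨⊥, bot_le, finrank_bot K V⟩
  | succ m ih =>
    obtain ⟨U, hUC, hU⟩ := ih (le_trans (Nat.le_succ m) h)
    have hne : U ≠ C := fun he => by
      rw [he] at hU; omega
    obtain ⟨x, hxC, hxU⟩ := SetLike.exists_of_lt (lt_of_le_of_ne hUC hne)
    have hx0 : x ≠ 0 := fun h0 => hxU (h0 ▸ U.zero_mem)
    refine ⟨U ⊔ Submodule.span K {x}, sup_le hUC ?_, ?_⟩
    · rwa [Submodule.span_le, Set.singleton_subset_iff]
    · have hinf : U ⊓ Submodule.span K {x} = ⊥ := by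
        rw [eq_bot_iff]
        rintro y ⟨hyU, hys⟩
        obtain ⟨c, rfl⟩ := Submodule.mem_span_singleton.mp hys
        rcases eq_or_ne c 0 with rfl | hc
        · simp
        · exact absurd (by simpa [smul_smul, inv_mul_cancel₀ hc] using U.smul_mem c⁻¹ hyU) hxU
      have := Submodule.finrank_sup_add_finrank_inf_eq U (Submodule.span K {x})
      rw [hinf, finrank_span_singleton hx0, hU] at this
      simpa using this

open scoped Classical in
lemma griesmer_main {p : ℕ} [Fact p.Prime] {ι : Type} [Fintype ι] :
    ∀ (r : ℕ) (D : Submodule (ZMod p) (ι → ZMod p)),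
      Module.finrank (ZMod p) ↥D = r →
      ∀ d : ℕ, (∀ x ∈ D, x ≠ 0 → d ≤ (Finset.univ.filter (fun i => x i ≠ 0)).card) →
      ∑ i ∈ Finset.range r, (d + p ^ i - 1) / p ^ i ≤
        (Finset.univ.filter (fun i : ι => ∃ x ∈ D, x i ≠ 0)).card := by
  intro r
  induction r with
  | zero => intro D _ d _; simp
  | succ r ih =>
    intro D hD d hd
    have hp : 0 < p := (Fact.out : p.Prime).pos
    have hp1 : 1 < p := (Fact.out : p.Prime).one_lt
    have hcard : Fintype.card (ZMod p) = p := ZMod.card p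
    -- a nonzero element exists
    have hnt : Nontrivial ↥D := by
      rw [← Module.finrank_pos_iff (R := ZMod p)]; omega
    obtain ⟨⟨x₀, hx₀D⟩, hx₀ne⟩ := exists_ne (0 : ↥D)
    have hx₀0 : x₀ ≠ 0 := fun h => hx₀ne (Subtype.ext h)
    -- minimal weight element
    set W : Set ℕ := {m | ∃ y ∈ D, y ≠ 0 ∧ (Finset.univ.filter (fun i => y i ≠ 0)).card = m} with hW
    have hWne : W.Nonempty := ⟨_, x₀, hx₀D, hx₀0, rfl⟩
    obtain ⟨x, hxD, hx0, hxw⟩ := Nat.sInf_mem hWne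
    set w : ℕ := sInf W with hwdef
    have hmin : ∀ y ∈ D, y ≠ 0 → w ≤ (Finset.univ.filter (fun i => y i ≠ 0)).card :=
      fun y hy hy0 => Nat.sInf_le ⟨y, hy, hy0, rfl⟩
    have hdw : d ≤ w := hxw ▸ hd x hxD hx0
    have hw1 : 1 ≤ w := by
      rw [← hxw, Nat.succ_le_iff, Finset.card_pos]
      obtain ⟨i, hi⟩ := Function.ne_iff.mp hx0
      exact ⟨i, Finset.mem_filter.mpr ⟨Finset.mem_univ i, hi⟩⟩
    -- the projection killing the support of x
    set π : (ι → ZMod p) →ₗ[ZMod p] (ι → ZMod p) :=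
      LinearMap.pi (fun i => if x i = 0 then LinearMap.proj i else 0) with hπdef
    have hπ : ∀ y i, π y i = if x i = 0 then y i else 0 := by
      intro y i
      simp only [hπdef, LinearMap.pi_apply]
      split <;> simp
    set S : Finset ι := Finset.univ.filter (fun i => x i ≠ 0) with hS
    have hSw : S.card = w := hxw
    set D' : Submodule (ZMod p) (ι → ZMod p) := D.map π with hD'
    set f : ↥D →ₗ[ZMod p] (ι → ZMod p) := π ∘ₗ D.subtype with hf
    have hrange : LinearMap.range f = D' := by
      rw [hf, LinearMap.range_comp, Submodule.range_subtype]
    have hπx : π x = 0 := by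
      funext i; rw [hπ]; split <;> simp_all
    -- kernel of f is the span of x
    -- counting helper: for i with x i ≠ 0, the solutions c of `v = c * x i` form a singleton
    have hsingle : ∀ (v : ZMod p) (i : ι), i ∈ S →
        Finset.univ.filter (fun c : ZMod p => v = c * x i) = {v * (x i)⁻¹} := by
      intro v i hi
      have hxi : x i ≠ 0 := (Finset.mem_filter.mp hi).2
      ext c
      simp only [Finset.mem_filter, Finset.mem_univ, true_and, Finset.mem_singleton]
      constructor
      · rintro rfl
        rw [mul_assoc, mul_inv_cancel₀ hxi, mul_one]
      · rintro rfl
        rw [mul_assoc, inv_mul_cancel₀ hxi, mul_one]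
    have hker : LinearMap.ker f = Submodule.span (ZMod p) {(⟨x, hxD⟩ : ↥D)} := by
      apply le_antisymm
      · intro y hy
        have hy' : π (y : ι → ZMod p) = 0 := hy
        have hy0 : ∀ i, x i = 0 → (y : ι → ZMod p) i = 0 := by
          intro i h0
          have := congrFun hy' i
          rwa [hπ, if_pos h0] at this
        set fib : ZMod p → ℕ :=
          fun c => (S.filter (fun i => (y : ι → ZMod p) i = c * x i)).card with hfib
        have hsum : ∑ c ∈ Finset.univ, fib c = w := by
          rw [hfib]
          simp only [Finset.card_filter]
          rw [Finset.sum_comm, ← hSw]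
          have h1 : ∀ i ∈ S, (∑ c : ZMod p, if (y : ι → ZMod p) i = c * x i then 1 else 0) = 1 := by
            intro i hi
            rw [← Finset.card_filter, hsingle _ i hi, Finset.card_singleton]
          rw [Finset.sum_congr rfl h1, Finset.sum_const, smul_eq_mul, mul_one]
        obtain ⟨c0, -, hmax⟩ := Finset.exists_max_image Finset.univ fib Finset.univ_nonempty
        have hwle : w ≤ p * fib c0 := by
          calc w = ∑ c ∈ Finset.univ, fib c := hsum.symm
            _ ≤ Finset.univ.card • fib c0 :=
                Finset.sum_le_card_nsmul _ _ _ (fun c _ => hmax c (Finset.mem_univ c))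
            _ = p * fib c0 := by rw [smul_eq_mul, Finset.card_univ, hcard]
        have hfib1 : 1 ≤ fib c0 := by
          rcases Nat.eq_zero_or_pos (fib c0) with h | h
          · rw [h, Nat.mul_zero] at hwle; omega
          · exact h
        set u : ι → ZMod p := (y : ι → ZMod p) - c0 • x with hu
        have huD : u ∈ D := D.sub_mem y.2 (D.smul_mem c0 hxD)
        have hsuppu : Finset.univ.filter (fun i => u i ≠ 0) ⊆
            S \ S.filter (fun i => (y : ι → ZMod p) i = c0 * x i) := by
          intro i hi
          have hui : u i ≠ 0 := (Finset.mem_filter.mp hi).2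
          rcases eq_or_ne (x i) 0 with h0 | h0
          · exfalso
            apply hui
            simp [hu, hy0 i h0, h0]
          · have hiS : i ∈ S := Finset.mem_filter.mpr ⟨Finset.mem_univ i, h0⟩
            refine Finset.mem_sdiff.mpr ⟨hiS, fun hmem => ?_⟩
            have := (Finset.mem_filter.mp hmem).2
            apply hui
            simp [hu, this, smul_eq_mul]
        have hu0 : u = 0 := by
          by_contra hu0
          have h1 := hmin u huD hu0
          have h2 : (Finset.univ.filter (fun i => u i ≠ 0)).card ≤ w - fib c0 := by
            calc (Finset.univ.filter (fun i => u i ≠ 0)).card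
                ≤ (S \ S.filter (fun i => (y : ι → ZMod p) i = c0 * x i)).card :=
                  Finset.card_le_card hsuppu
              _ = S.card - fib c0 := Finset.card_sdiff_of_subset (Finset.filter_subset _ _)
              _ = w - fib c0 := by rw [hSw]
          omega
        have hyx : (y : ι → ZMod p) = c0 • x := by
          have := sub_eq_zero.mp hu0
          exact this
        exact Submodule.mem_span_singleton.mpr ⟨c0, (Subtype.ext hyx).symm⟩
      · rw [Submodule.span_le, Set.singleton_subset_iff]
        exact LinearMap.mem_ker.mpr hπx
    have hrank' : Module.finrank (ZMod p) ↥D' = r := by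
      have h1 := LinearMap.finrank_range_add_finrank_ker f
      rw [hrange, hker, finrank_span_singleton (by exact fun h => hx0 (congrArg Subtype.val h)),
        hD] at h1
      omega
    -- minimum weight of D'
    have hd' : ∀ z ∈ D', z ≠ 0 → w ≤ p * (Finset.univ.filter (fun i => z i ≠ 0)).card := by
      rintro z hz hz0
      obtain ⟨y, hyD, rfl⟩ := Submodule.mem_map.mp hz
      set val : ZMod p → ℕ :=
        fun c => (S.filter (fun i => y i ≠ c * x i)).card with hval
      have hvsum : ∑ c ∈ Finset.univ, val c = w * (p - 1) := by
        rw [hval]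
        simp only [Finset.card_filter]
        rw [Finset.sum_comm]
        have h1 : ∀ i ∈ S, (∑ c : ZMod p, if y i ≠ c * x i then 1 else 0) = p - 1 := by
          intro i hi
          rw [← Finset.card_filter]
          have h2 := Finset.card_filter_add_card_filter_not
            (s := (Finset.univ : Finset (ZMod p))) (p := fun c => y i = c * x i)
          rw [hsingle (y i) i hi, Finset.card_singleton, Finset.card_univ, hcard] at h2
          have h3 : (Finset.filter (fun c : ZMod p => ¬ y i = c * x i) Finset.univ).card = p - 1 := by
            omega
          rw [← h3]
        rw [Finset.sum_congr rfl h1, Finset.sum_const, smul_eq_mul, ← hSw, mul_comm]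
      obtain ⟨c0, -, hminv⟩ := Finset.exists_min_image Finset.univ val Finset.univ_nonempty
      have hvle : p * val c0 ≤ w * (p - 1) := by
        calc p * val c0 = Finset.univ.card • val c0 := by rw [smul_eq_mul, Finset.card_univ, hcard]
          _ ≤ ∑ c ∈ Finset.univ, val c :=
              Finset.card_nsmul_le_sum _ _ _ (fun c _ => hminv c (Finset.mem_univ c))
          _ = w * (p - 1) := hvsum
      set u : ι → ZMod p := y - c0 • x with hu
      have huD : u ∈ D := D.sub_mem hyD (D.smul_mem c0 hxD)
      have hu0 : u ≠ 0 := by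
        obtain ⟨i, hi⟩ := Function.ne_iff.mp hz0
        have hi' : π y i ≠ 0 := by simpa using hi
        have hxi : x i = 0 := by
          by_contra h0
          exact hi' (by rw [hπ, if_neg h0])
        have hzi : π y i = y i := by rw [hπ, if_pos hxi]
        intro h0
        have := congrFun h0 i
        simp only [hu, Pi.sub_apply, Pi.smul_apply, smul_eq_mul, hxi, mul_zero, sub_zero,
          Pi.zero_apply] at this
        exact hi' (by rw [hzi, this])
      have hwu := hmin u huD hu0
      have hsuppu : Finset.univ.filter (fun i => u i ≠ 0) ⊆
          Finset.univ.filter (fun i => π y i ≠ 0) ∪ S.filter (fun i => y i ≠ c0 * x i) := by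
        intro i hi
        have hui : u i ≠ 0 := (Finset.mem_filter.mp hi).2
        rcases eq_or_ne (x i) 0 with h0 | h0
        · apply Finset.mem_union_left
          refine Finset.mem_filter.mpr ⟨Finset.mem_univ i, ?_⟩
          rw [hπ, if_pos h0]
          intro hyi
          apply hui
          simp [hu, hyi, h0]
        · apply Finset.mem_union_right
          refine Finset.mem_filter.mpr ⟨Finset.mem_filter.mpr ⟨Finset.mem_univ i, h0⟩, ?_⟩
          intro hyi
          apply hui
          simp [hu, hyi, smul_eq_mul]
      have hcount : w ≤ (Finset.univ.filter (fun i => π y i ≠ 0)).card + val c0 := by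
        calc w ≤ (Finset.univ.filter (fun i => u i ≠ 0)).card := hwu
          _ ≤ (Finset.univ.filter (fun i => π y i ≠ 0) ∪
                S.filter (fun i => y i ≠ c0 * x i)).card := Finset.card_le_card hsuppu
          _ ≤ _ := Finset.card_union_le _ _
      -- combine: p * w ≤ p * A + p * val ≤ p * A + w * (p-1), hence w ≤ p * A
      set A : ℕ := (Finset.univ.filter (fun i => π y i ≠ 0)).card
      have h7 : p * w ≤ p * A + w * (p - 1) := by
        calc p * w ≤ p * (A + val c0) := Nat.mul_le_mul_left _ hcount
          _ = p * A + p * val c0 := Nat.mul_add _ _ _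
          _ ≤ p * A + w * (p - 1) := Nat.add_le_add_left hvle _
      have h8 : w * (p - 1) + w = w * p := by
        rw [← Nat.mul_succ]
        congr 1
        omega
      have h9 : p * w + w ≤ p * A + p * w := by
        calc p * w + w ≤ (p * A + w * (p - 1)) + w := Nat.add_le_add_right h7 _
          _ = p * A + (w * (p - 1) + w) := by omega
          _ = p * A + w * p := by rw [h8]
          _ = p * A + p * w := by rw [Nat.mul_comm w p]
      omega
    -- support accounting
    have hsupp : S.card + (Finset.univ.filter (fun i : ι => ∃ z ∈ D', z i ≠ 0)).card ≤
        (Finset.univ.filter (fun i : ι => ∃ y ∈ D, y i ≠ 0)).card := by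
      have hsub : S ∪ Finset.univ.filter (fun i : ι => ∃ z ∈ D', z i ≠ 0) ⊆
          Finset.univ.filter (fun i : ι => ∃ y ∈ D, y i ≠ 0) := by
        intro i hi
        rcases Finset.mem_union.mp hi with h | h
        · exact Finset.mem_filter.mpr ⟨Finset.mem_univ i, x, hxD, (Finset.mem_filter.mp h).2⟩
        · obtain ⟨z, hz, hzi⟩ := (Finset.mem_filter.mp h).2
          obtain ⟨y, hyD, rfl⟩ := Submodule.mem_map.mp hz
          refine Finset.mem_filter.mpr ⟨Finset.mem_univ i, y, hyD, fun h0 => hzi ?_⟩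
          rw [hπ]
          split <;> simp [h0]
      have hdisj : Disjoint S (Finset.univ.filter (fun i : ι => ∃ z ∈ D', z i ≠ 0)) := by
        rw [Finset.disjoint_left]
        intro i hiS hi'
        obtain ⟨z, hz, hzi⟩ := (Finset.mem_filter.mp hi').2
        obtain ⟨y, hyD, rfl⟩ := Submodule.mem_map.mp hz
        apply hzi
        rw [hπ, if_neg (Finset.mem_filter.mp hiS).2]
      calc S.card + (Finset.univ.filter (fun i : ι => ∃ z ∈ D', z i ≠ 0)).card
          = (S ∪ Finset.univ.filter (fun i : ι => ∃ z ∈ D', z i ≠ 0)).card :=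
            (Finset.card_union_of_disjoint hdisj).symm
        _ ≤ _ := Finset.card_le_card hsub
    -- apply IH
    set d' : ℕ := (w + p - 1) / p with hd'def
    have hIH := ih D' hrank' d' (fun z hz hz0 => (ceil_div_le_iff hp).mpr (hd' z hz hz0))
    -- arithmetic
    have hterm : ∀ i, (d + p ^ (i + 1) - 1) / p ^ (i + 1) ≤ (d' + p ^ i - 1) / p ^ i := by
      intro i
      rw [ceil_div_le_iff (Nat.pow_pos hp)]
      have h1 : d' ≤ p ^ i * ((d' + p ^ i - 1) / p ^ i) :=
        (ceil_div_le_iff (Nat.pow_pos hp)).mp le_rfl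
      have h2 : w ≤ p * d' := (ceil_div_le_iff hp).mp le_rfl
      calc d ≤ w := hdw
        _ ≤ p * d' := h2
        _ ≤ p * (p ^ i * ((d' + p ^ i - 1) / p ^ i)) := Nat.mul_le_mul_left _ h1
        _ = p ^ (i + 1) * ((d' + p ^ i - 1) / p ^ i) := by ring
    calc ∑ i ∈ Finset.range (r + 1), (d + p ^ i - 1) / p ^ i
        = ∑ i ∈ Finset.range r, (d + p ^ (i + 1) - 1) / p ^ (i + 1) + (d + p ^ 0 - 1) / p ^ 0 :=
          Finset.sum_range_succ' _ r
      _ = (d + p ^ 0 - 1) / p ^ 0 + ∑ i ∈ Finset.range r, (d + p ^ (i + 1) - 1) / p ^ (i + 1) :=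
          Nat.add_comm _ _
      _ ≤ d + ∑ i ∈ Finset.range r, (d' + p ^ i - 1) / p ^ i := by
          simp only [pow_zero, Nat.add_sub_cancel, Nat.div_one]
          exact Nat.add_le_add le_rfl (Finset.sum_le_sum fun i _ => hterm i)
      _ ≤ w + (Finset.univ.filter (fun i : ι => ∃ z ∈ D', z i ≠ 0)).card :=
          Nat.add_le_add hdw hIH
      _ ≤ (Finset.univ.filter (fun i : ι => ∃ y ∈ D, y i ≠ 0)).card := by
          rw [← hSw]; exact hsupp

open scoped Classical in
/-- The `r`-th generalized Hamming weight of a linear code `C ≤ F_p^ι`. -/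
noncomputable def ghw {p : ℕ} {ι : Type} [Fintype ι]
    (C : Submodule (ZMod p) (ι → ZMod p)) (r : ℕ) : ℕ :=
  sInf {k | ∃ U : Submodule (ZMod p) (ι → ZMod p), U ≤ C ∧
    Module.finrank (ZMod p) ↥U = r ∧
    (Finset.univ.filter (fun i : ι => ∃ x ∈ U, x i ≠ 0)).card = k}

lemma card_filter_congr {α : Type} [Fintype α] {p q : α → Prop}
    (hp : DecidablePred p) (hq : DecidablePred q) (h : ∀ a, p a ↔ q a) :
    (@Finset.filter α p hp Finset.univ).card = (@Finset.filter α q hq Finset.univ).card :=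
  congrArg Finset.card (Finset.filter_congr (fun x _ => h x))

open scoped Classical in
lemma ghw_le' {p : ℕ} {ι : Type} [Fintype ι] (C U : Submodule (ZMod p) (ι → ZMod p))
    (hUC : U ≤ C) {r m : ℕ} (hU : Module.finrank (ZMod p) ↥U = r)
    (hcard : (Finset.univ.filter (fun i : ι => ∃ x ∈ U, x i ≠ 0)).card = m) :
    ghw C r ≤ m :=
  Nat.sInf_le ⟨U, hUC, hU, hcard⟩

open scoped Classical in
lemma ghw_exists' {p : ℕ} {ι : Type} [Fintype ι] (C U₀ : Submodule (ZMod p) (ι → ZMod p)) {r : ℕ}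
    (hUC : U₀ ≤ C) (hU : Module.finrank (ZMod p) ↥U₀ = r) :
    ∃ U : Submodule (ZMod p) (ι → ZMod p), U ≤ C ∧ Module.finrank (ZMod p) ↥U = r ∧
      (Finset.univ.filter (fun i : ι => ∃ x ∈ U, x i ≠ 0)).card = ghw C r := by
  have hne : {m | ∃ U : Submodule (ZMod p) (ι → ZMod p), U ≤ C ∧
      Module.finrank (ZMod p) ↥U = r ∧
      (Finset.univ.filter (fun i : ι => ∃ x ∈ U, x i ≠ 0)).card = m}.Nonempty :=
    ⟨_, U₀, hUC, hU, rfl⟩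
  exact Nat.sInf_mem hne

set_option maxHeartbeats 2000000 in
open scoped Classical in
/-- Griesmer-like bound: `d_r(C) ≥ Σ_{i=0}^{r-1} ⌈d_1(C)/p^i⌉`
(for naturals, `⌈a/b⌉ = (a + b - 1)/b` when `b > 0`). -/
theorem stmt2 (p n k r : ℕ) [Fact p.Prime]
    (C : Submodule (ZMod p) (Fin n → ZMod p))
    (hk : Module.finrank (ZMod p) ↥C = k)
    (hr1 : 1 ≤ r) (hrk : r ≤ k) :
    ∑ i ∈ Finset.range r, (ghw C 1 + p ^ i - 1) / p ^ i ≤ ghw C r := by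
  have hd1 : ∀ x ∈ C, x ≠ 0 →
      ghw C 1 ≤ (Finset.univ.filter (fun i => x i ≠ 0)).card := by
    intro x hx hx0
    refine ghw_le' C (Submodule.span (ZMod p) {x}) ?_ (finrank_span_singleton hx0) ?_
    · rwa [Submodule.span_le, Set.singleton_subset_iff]
    · refine card_filter_congr _ _ (fun i => ?_)
      constructor
      · rintro ⟨y, hy, hyi⟩
        obtain ⟨c, rfl⟩ := Submodule.mem_span_singleton.mp hy
        intro h0
        apply hyi
        simp [h0]
      · intro h
        exact ⟨x, Submodule.mem_span_singleton_self x, h⟩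
  obtain ⟨U, hUC, hU⟩ := exists_sub C r (hk ▸ hrk)
  obtain ⟨D, hDC, hDr, hDcard⟩ := ghw_exists' C U hUC hU
  have hmain := griesmer_main r D hDr (ghw C 1) (fun x hx hx0 => hd1 x (hDC hx) hx0)
  refine le_trans (le_trans hmain (le_of_eq ?_)) (le_of_eq hDcard)
  exact card_filter_congr _ _ (fun a => Iff.rfl)
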